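/- The Shapley value is the unique allocation rule satisfying the four axioms: if ψ assigns to every cooperative game v : 2^N → ℝ with v(∅) = 0 a payoff vector (ψ_i(v))_{i ∈ N} such that (Efficiency) Σ_{i ∈ N} ψ_i(v) = v(N) for every game v; (Symmetry) ψ_i(v) = ψ_j(v) whenever v(S ∪ {i}) = v(S ∪ {j}) for all S ⊆ N \ {i, j}; (Dummy) ψ_i(v) = 0 whenever v(S ∪ {i}) = v(S) for all S ⊆ N \ {i}; and (Additivity) ψ_i(v + w) = ψ_i(v) + ψ_i(w) for all games v, w and all i; then ψ_i(v) = φ_i(v) for every game v and every player i ∈ N. -/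

import Mathlib

open Finset

section ShapleyAux

/-- Key binomial identity: `∑_{k=0}^m C(m,k)/C(m+t-1, k+(t-1)) = (m+t)/t`. -/
private lemma shapley_key_identity (m t : ℕ) (ht : 0 < t) :
    ∑ k ∈ range (m + 1), (m.choose k : ℝ) * (((m + t - 1).choose (k + (t - 1)) : ℝ))⁻¹
      = (m + t) / t := by
  set p := m + t - 1 with hp
  have hpm : m ≤ p := by omega
  have hcpm : (0 : ℝ) < (p.choose m : ℝ) := by exact_mod_cast Nat.choose_pos hpm
  have hrefl : ∑ k ∈ range (m + 1), (m.choose k : ℝ) * ((p.choose (k + (t - 1)) : ℝ))⁻¹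
      = ∑ j ∈ range (m + 1), (m.choose j : ℝ) * ((p.choose j : ℝ))⁻¹ := by
    rw [← Finset.sum_range_reflect (fun j => (m.choose j : ℝ) * ((p.choose j : ℝ))⁻¹) (m+1)]
    refine Finset.sum_congr rfl fun k hk => ?_
    have hk' : k ≤ m := by simpa [Nat.lt_succ_iff] using hk
    have h1 : m + 1 - 1 - k = m - k := by omega
    have h2 : m.choose (m - k) = m.choose k := Nat.choose_symm hk'
    have h3 : p - (m - k) = k + (t - 1) := by omega
    have h4 : p.choose (m - k) = p.choose (k + (t - 1)) := by
      rw [← Nat.choose_symm (by omega : m - k ≤ p), h3]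
    simp only [h1, h2, h4]
  rw [hrefl]
  have hterm : ∀ j ∈ range (m + 1),
      (m.choose j : ℝ) * ((p.choose j : ℝ))⁻¹
        = ((p - j).choose (p - m) : ℝ) * ((p.choose m : ℝ))⁻¹ := by
    intro j hj
    have hj' : j ≤ m := by simpa [Nat.lt_succ_iff] using hj
    have hmul := Nat.choose_mul (n := p) hj'
    have hsym : (p - j).choose (m - j) = (p - j).choose (p - m) := by
      rw [← Nat.choose_symm (by omega : m - j ≤ p - j)]
      congr 1; omega
    have hcpj : (0 : ℝ) < (p.choose j : ℝ) := by
      exact_mod_cast Nat.choose_pos (le_trans hj' hpm)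
    have : (p.choose m : ℝ) * (m.choose j : ℝ)
        = (p.choose j : ℝ) * ((p - j).choose (p - m) : ℝ) := by
      rw [← hsym]; exact_mod_cast congrArg (Nat.cast : ℕ → ℝ) hmul
    field_simp
    linarith [this]
  rw [Finset.sum_congr rfl hterm, ← Finset.sum_mul]
  have hhs : ∑ j ∈ range (m + 1), ((p - j).choose (p - m) : ℝ)
      = ((p + 1).choose (p - m + 1) : ℝ) := by
    rw [← Nat.sum_Icc_choose p (p - m)]
    push_cast
    refine Finset.sum_nbij' (fun j => p - j) (fun r => p - r) ?_ ?_ ?_ ?_ ?_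
    · intro j hj; simp only [mem_range, Nat.lt_succ_iff] at hj; simp [mem_Icc]; omega
    · intro r hr; simp only [mem_Icc] at hr; simp [mem_range]; omega
    · intro j hj; simp only [mem_range, Nat.lt_succ_iff] at hj
      show p - (p - j) = j; omega
    · intro r hr; simp only [mem_Icc] at hr
      show p - (p - r) = r; omega
    · intro j hj; rfl
  rw [hhs]
  have h5 : (p + 1).choose (p - m + 1) = (p + 1).choose m := by
    rw [← Nat.choose_symm (by omega : m ≤ p + 1)]; congr 1; omega
  have h6 : (p + 1).choose m * t = (p + 1) * p.choose m := by
    have hpt : p + 1 - m = t := by omega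
    calc (p + 1).choose m * t = (p + 1).choose m * (p + 1 - m) := by rw [hpt]
      _ = (p + 1).choose (m + 1) * (m + 1) := (Nat.choose_succ_right_eq (p + 1) m).symm
      _ = (p + 1) * p.choose m := (Nat.add_one_mul_choose_eq p m).symm
  have h7 : ((p + 1).choose m : ℝ) * t = (p + 1) * (p.choose m : ℝ) := by exact_mod_cast h6
  have ht' : (0 : ℝ) < (t : ℝ) := by exact_mod_cast ht
  have hn : ((m : ℝ) + t) = ((p : ℝ) + 1) := by
    have : m + t = p + 1 := by omega
    exact_mod_cast this
  rw [h5, hn]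
  field_simp
  linarith [h7]

variable {α : Type*} [DecidableEq α]

/-- Unanimity game on coalition `T`. -/
private def unanGame (T S : Finset α) : ℝ := if T ⊆ S then 1 else 0

/-- Möbius (Harsanyi dividend) coefficients. -/
private def unanCoef (v : Finset α → ℝ) (T : Finset α) : ℝ :=
  ∑ R ∈ T.powerset, (-1 : ℝ) ^ (T.card - R.card) * v R

private lemma unanCoef_empty (v : Finset α → ℝ) : unanCoef v ∅ = v ∅ := by
  simp [unanCoef]

/-- Möbius inversion on subsets: `∑_{T ⊆ S} c_T = v S`. -/
private lemma sum_unanCoef (v : Finset α → ℝ) (S : Finset α) :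
    ∑ T ∈ S.powerset, unanCoef v T = v S := by
  unfold unanCoef
  have step1 : ∀ T ∈ S.powerset,
      ∑ R ∈ T.powerset, (-1 : ℝ) ^ (T.card - R.card) * v R
        = ∑ R ∈ S.powerset, if R ⊆ T then (-1 : ℝ) ^ (T.card - R.card) * v R else 0 := by
    intro T hT
    rw [mem_powerset] at hT
    calc ∑ R ∈ T.powerset, (-1 : ℝ) ^ (T.card - R.card) * v R
        = ∑ R ∈ T.powerset, (if R ⊆ T then (-1 : ℝ) ^ (T.card - R.card) * v R else 0) :=
          Finset.sum_congr rfl fun R hR => (if_pos (mem_powerset.1 hR)).symm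
      _ = ∑ R ∈ S.powerset, (if R ⊆ T then (-1 : ℝ) ^ (T.card - R.card) * v R else 0) :=
          Finset.sum_subset (powerset_mono.2 hT)
            (fun R _ hR => if_neg fun h => hR (mem_powerset.2 h))
  rw [Finset.sum_congr rfl step1, Finset.sum_comm]
  have step2 : ∀ R ∈ S.powerset,
      ∑ T ∈ S.powerset, (if R ⊆ T then (-1 : ℝ) ^ (T.card - R.card) * v R else 0)
        = (if R = S then 1 else 0) * v R := by
    intro R hR
    rw [mem_powerset] at hR
    have : ∑ T ∈ S.powerset, (if R ⊆ T then (-1 : ℝ) ^ (T.card - R.card) * v R else 0)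
        = ∑ T ∈ S.powerset with R ⊆ T, (-1 : ℝ) ^ (T.card - R.card) * v R :=
      (Finset.sum_filter _ _).symm
    rw [this, ← Finset.sum_mul]
    congr 1
    have hbij : ∑ T ∈ S.powerset with R ⊆ T, (-1 : ℝ) ^ (T.card - R.card)
        = ∑ U ∈ (S \ R).powerset, (-1 : ℝ) ^ U.card := by
      refine Finset.sum_nbij' (fun T => T \ R) (fun U => U ∪ R) ?_ ?_ ?_ ?_ ?_
      · intro T hT
        rw [mem_filter, mem_powerset] at hT
        exact mem_powerset.2 (sdiff_subset_sdiff hT.1 Subset.rfl)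
      · intro U hU
        rw [mem_powerset] at hU
        refine mem_filter.2 ⟨mem_powerset.2 (union_subset (hU.trans sdiff_subset) hR),
          subset_union_right⟩
      · intro T hT
        rw [mem_filter] at hT
        exact sdiff_union_of_subset hT.2
      · intro U hU
        rw [mem_powerset] at hU
        exact union_sdiff_cancel_right (sdiff_disjoint.mono_left hU)
      · intro T hT
        rw [mem_filter] at hT
        rw [card_sdiff_of_subset hT.2]
    rw [hbij]
    have : ∑ U ∈ (S \ R).powerset, (-1 : ℝ) ^ U.card
        = ((∑ U ∈ (S \ R).powerset, (-1 : ℤ) ^ U.card : ℤ) : ℝ) := by push_cast; rfl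
    rw [this, Finset.sum_powerset_neg_one_pow_card]
    by_cases h : R = S
    · simp [h]
    · have : ¬ S \ R = ∅ := by
        rw [sdiff_eq_empty_iff_subset]
        exact fun hSR => h (Subset.antisymm hR hSR)
      simp [h, this]
  rw [Finset.sum_congr rfl step2]
  simp only [ite_mul, one_mul, zero_mul]
  rw [Finset.sum_ite_eq' S.powerset S v]
  rw [if_pos (mem_powerset.2 Subset.rfl)]

end ShapleyAux

/-- The Shapley value of player `i` in the cooperative game with characteristic
function `v` on the (finite) player set `N = univ`:
`φ_i(v) = (1/n) · Σ_{S ⊆ N \ {i}} C(n−1, |S|)⁻¹ · (v(S ∪ {i}) − v(S))`. -/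
noncomputable def shapley {α : Type*} [Fintype α] [DecidableEq α]
    (v : Finset α → ℝ) (i : α) : ℝ :=
  ((Fintype.card α : ℝ))⁻¹ *
    ∑ S ∈ (Finset.univ \ {i} : Finset α).powerset,
      ((Nat.choose (Fintype.card α - 1) S.card : ℝ))⁻¹ * (v (insert i S) - v S)

section ShapleyAux2

variable {α : Type*} [Fintype α] [DecidableEq α]

/-- `shapley` is additive over finite families of games. -/
private lemma shapley_finsum {β : Type*} (F : Finset β) (g : β → Finset α → ℝ) (i : α) :
    shapley (fun S => ∑ t ∈ F, g t S) i = ∑ t ∈ F, shapley (g t) i := by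
  unfold shapley
  rw [← Finset.mul_sum]
  congr 1
  rw [Finset.sum_comm]
  refine Finset.sum_congr rfl fun S _ => ?_
  rw [← Finset.sum_sub_distrib, Finset.mul_sum]

private lemma shapley_unan_not_mem (c : ℝ) (T : Finset α) (i : α) (hi : i ∉ T) :
    shapley (fun S => c * unanGame T S) i = 0 := by
  unfold shapley
  have : ∀ S ∈ (Finset.univ \ {i} : Finset α).powerset,
      ((Nat.choose (Fintype.card α - 1) S.card : ℝ))⁻¹ *
        (c * unanGame T (insert i S) - c * unanGame T S) = 0 := by
    intro S _
    have : unanGame T (insert i S) = unanGame T S := by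
      unfold unanGame
      simp only [Finset.subset_insert_iff_of_notMem hi]
    rw [this]; ring
  rw [Finset.sum_congr rfl this]
  simp

private lemma shapley_unan_mem (c : ℝ) (T : Finset α) (i : α) (hi : i ∈ T) :
    shapley (fun S => c * unanGame T S) i = c / T.card := by
  classical
  set n := Fintype.card α with hn
  set t := T.card with ht
  set E := T.erase i with hE
  have htpos : 0 < t := card_pos.2 ⟨i, hi⟩
  have htn : t ≤ n := by rw [ht, hn]; exact card_le_univ T
  have hnpos : 0 < n := lt_of_lt_of_le htpos htn
  have hEcard : E.card = t - 1 := by rw [hE, card_erase_of_mem hi]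
  set m := n - t with hm
  have hmcard : (Finset.univ \ T : Finset α).card = m := by
    rw [card_sdiff_of_subset (subset_univ T), card_univ]
  unfold shapley
  have step1 : ∀ S ∈ (Finset.univ \ {i} : Finset α).powerset,
      ((Nat.choose (n - 1) S.card : ℝ))⁻¹ * (c * unanGame T (insert i S) - c * unanGame T S)
        = (if E ⊆ S then c * ((Nat.choose (n - 1) S.card : ℝ))⁻¹ else 0) := by
    intro S hS
    have hiS : i ∉ S := by
      intro h
      have := (mem_powerset.1 hS) h
      simp at this
    have h1 : unanGame T S = 0 := by
      unfold unanGame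
      rw [if_neg (fun h => hiS (h hi))]
    have h2 : unanGame T (insert i S) = if E ⊆ S then 1 else 0 := by
      unfold unanGame
      simp only [Finset.subset_insert_iff, hE]
    rw [h1, h2]
    by_cases h : E ⊆ S <;> simp [h] <;> ring
  rw [Finset.sum_congr rfl step1, ← Finset.sum_filter]
  have step2 : ∑ S ∈ (Finset.univ \ {i} : Finset α).powerset with E ⊆ S,
        c * ((Nat.choose (n - 1) S.card : ℝ))⁻¹
      = ∑ U ∈ (Finset.univ \ T : Finset α).powerset,
        c * ((Nat.choose (n - 1) (U.card + (t - 1)) : ℝ))⁻¹ := by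
    refine Finset.sum_nbij' (fun S => S \ E) (fun U => U ∪ E) ?_ ?_ ?_ ?_ ?_
    · intro S hS
      rw [mem_filter, mem_powerset] at hS
      rw [mem_powerset]
      intro x hx
      rw [mem_sdiff] at hx ⊢
      refine ⟨mem_univ x, fun hxT => ?_⟩
      rcases (show x = i ∨ x ∈ E by
        rw [hE]; rcases eq_or_ne x i with h | h
        · exact Or.inl h
        · exact Or.inr (mem_erase.2 ⟨h, hxT⟩)) with h | h
      · have := hS.1 hx.1; rw [mem_sdiff, mem_singleton] at this; exact this.2 h
      · exact hx.2 h
    · intro U hU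
      rw [mem_powerset] at hU
      rw [mem_filter, mem_powerset]
      refine ⟨union_subset ?_ ?_, subset_union_right⟩
      · intro x hx
        have := hU hx
        rw [mem_sdiff] at this
        rw [mem_sdiff, mem_singleton]
        exact ⟨mem_univ x, fun h => this.2 (h ▸ hi)⟩
      · intro x hx
        rw [mem_sdiff, mem_singleton]
        exact ⟨mem_univ x, (mem_erase.1 (hE ▸ hx)).1⟩
    · intro S hS
      rw [mem_filter] at hS
      exact sdiff_union_of_subset hS.2
    · intro U hU
      rw [mem_powerset] at hU
      refine union_sdiff_cancel_right (Finset.disjoint_left.2 fun x hxU hxE => ?_)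
      have := hU hxU
      rw [mem_sdiff] at this
      exact this.2 (erase_subset i T (hE ▸ hxE))
    · intro S hS
      rw [mem_filter] at hS
      have : S.card = (S \ E).card + (t - 1) := by
        rw [← hEcard, eq_comm]
        exact card_sdiff_add_card_eq_card hS.2
      rw [this]
  rw [step2]
  have step3 : ∑ U ∈ (Finset.univ \ T : Finset α).powerset,
        c * ((Nat.choose (n - 1) (U.card + (t - 1)) : ℝ))⁻¹
      = ∑ k ∈ range (m + 1),
          (m.choose k) • (c * ((Nat.choose (n - 1) (k + (t - 1)) : ℝ))⁻¹) := by
    rw [Finset.sum_powerset_apply_card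
      (fun j => c * ((Nat.choose (n - 1) (j + (t - 1)) : ℝ))⁻¹), hmcard]
  rw [step3]
  simp only [nsmul_eq_mul]
  have hrw : ∀ k ∈ range (m + 1),
      (m.choose k : ℝ) * (c * ((Nat.choose (n - 1) (k + (t - 1)) : ℝ))⁻¹)
        = c * ((m.choose k : ℝ) * ((Nat.choose (m + t - 1) (k + (t - 1)) : ℝ))⁻¹) := by
    intro k _
    have : n - 1 = m + t - 1 := by omega
    rw [this]; ring
  rw [Finset.sum_congr rfl hrw, ← Finset.mul_sum, shapley_key_identity m t htpos]
  have hmt : ((m : ℝ) + t) = (n : ℝ) := by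
    have : m + t = n := by omega
    exact_mod_cast this
  rw [hmt]
  have hn0 : (n : ℝ) ≠ 0 := Nat.cast_ne_zero.2 hnpos.ne'
  have ht0 : (t : ℝ) ≠ 0 := Nat.cast_ne_zero.2 htpos.ne'
  field_simp
  rw [← hn, mul_div_assoc, div_self hn0, mul_one]

end ShapleyAux2

/-- Uniqueness of the Shapley value: any allocation rule `ψ` (assigning payoffs to
every cooperative game with `v ∅ = 0`) satisfying Efficiency, Symmetry, Dummy and
Additivity coincides with the Shapley value on every such game. -/
theorem shapley_unique {α : Type*} [Fintype α] [DecidableEq α] [Nonempty α]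
    (ψ : (Finset α → ℝ) → α → ℝ)
    (hEff : ∀ v : Finset α → ℝ, v ∅ = 0 → ∑ i : α, ψ v i = v Finset.univ)
    (hSym : ∀ v : Finset α → ℝ, v ∅ = 0 → ∀ i j : α,
      (∀ S ⊆ (Finset.univ \ ({i, j} : Finset α)),
        v (insert i S) = v (insert j S)) → ψ v i = ψ v j)
    (hDummy : ∀ v : Finset α → ℝ, v ∅ = 0 → ∀ i : α,
      (∀ S ⊆ (Finset.univ \ ({i} : Finset α)), v (insert i S) = v S) → ψ v i = 0)
    (hAdd : ∀ v w : Finset α → ℝ, v ∅ = 0 → w ∅ = 0 → ∀ i : α,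
      ψ (fun S => v S + w S) i = ψ v i + ψ w i) :
    ∀ v : Finset α → ℝ, v ∅ = 0 → ∀ i : α, ψ v i = shapley v i := by
  intro v hv i
  -- decomposition into unanimity games
  have hdecomp : ∀ S : Finset α,
      v S = ∑ T ∈ (Finset.univ : Finset α).powerset, unanCoef v T * unanGame T S := by
    intro S
    have h1 : ∑ T ∈ S.powerset, unanCoef v T * unanGame T S
        = ∑ T ∈ (Finset.univ : Finset α).powerset, unanCoef v T * unanGame T S := by
      refine Finset.sum_subset (powerset_mono.2 (subset_univ S)) ?_
      intro T _ hT
      have : ¬ T ⊆ S := fun h => hT (mem_powerset.2 h)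
      unfold unanGame
      rw [if_neg this, mul_zero]
    rw [← h1]
    rw [← sum_unanCoef v S]
    refine Finset.sum_congr rfl fun T hT => ?_
    unfold unanGame
    rw [if_pos (mem_powerset.1 hT), mul_one]
  -- each component game vanishes at ∅
  have hg0 : ∀ T ∈ (Finset.univ : Finset α).powerset, unanCoef v T * unanGame T ∅ = 0 := by
    intro T _
    by_cases h : T = ∅
    · rw [h, unanCoef_empty, hv, zero_mul]
    · have : ¬ T ⊆ ∅ := fun hsub => h (subset_empty.1 hsub)
      unfold unanGame
      rw [if_neg this, mul_zero]
  -- ψ of the zero game is zero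
  have hψ0 : ∀ j : α, ψ (fun _ => (0 : ℝ)) j = 0 := fun j =>
    hDummy (fun _ => 0) rfl j (fun _ _ => rfl)
  -- ψ is additive over finite families of games vanishing at ∅
  have hψsum : ∀ (F : Finset (Finset α)) (g : Finset α → Finset α → ℝ),
      (∀ t ∈ F, g t ∅ = 0) → ∀ j : α,
        ψ (fun S => ∑ t ∈ F, g t S) j = ∑ t ∈ F, ψ (g t) j := by
    intro F
    induction F using Finset.induction_on with
    | empty =>
      intro g _ j
      have : (fun S : Finset α => ∑ t ∈ (∅ : Finset (Finset α)), g t S) = fun _ => (0 : ℝ) := by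
        funext S; simp
      rw [this, hψ0 j, Finset.sum_empty]
    | @insert a F ha ih =>
      intro g hg j
      have hsplit : (fun S : Finset α => ∑ t ∈ insert a F, g t S)
          = fun S => g a S + ∑ t ∈ F, g t S := by
        funext S; rw [Finset.sum_insert ha]
      have hF0 : (∑ t ∈ F, g t ∅) = 0 :=
        Finset.sum_eq_zero fun t htF => hg t (mem_insert_of_mem htF)
      rw [hsplit, hAdd (g a) (fun S => ∑ t ∈ F, g t S)
        (hg a (mem_insert_self a F)) hF0 j,
        ih g (fun t htF => hg t (mem_insert_of_mem htF)) j,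
        Finset.sum_insert ha]
  -- value of ψ on each component game
  have hcomp : ∀ T ∈ (Finset.univ : Finset α).powerset,
      ψ (fun S => unanCoef v T * unanGame T S) i
        = if i ∈ T then unanCoef v T / T.card else 0 := by
    intro T _
    by_cases hTe : T = ∅
    · subst hTe
      have : (fun S : Finset α => unanCoef v ∅ * unanGame ∅ S) = fun _ => (0 : ℝ) := by
        funext S
        rw [unanCoef_empty, hv, zero_mul]
      rw [this, hψ0 i]
      simp
    · have hTne : T.Nonempty := nonempty_iff_ne_empty.2 hTe
      set c := unanCoef v T with hc
      set w := fun S => c * unanGame T S with hw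
      have hw0 : w ∅ = 0 := by
        have : ¬ T ⊆ ∅ := fun hsub => hTe (subset_empty.1 hsub)
        simp only [hw, unanGame, if_neg this, mul_zero]
      -- dummy players outside T
      have hdum : ∀ j : α, j ∉ T → ψ w j = 0 := by
        intro j hj
        refine hDummy w hw0 j (fun S _ => ?_)
        show c * unanGame T (insert j S) = c * unanGame T S
        unfold unanGame
        simp only [Finset.subset_insert_iff_of_notMem hj]
      by_cases hiT : i ∈ T
      · -- symmetry among members of T
        have hsym2 : ∀ j ∈ T, ψ w j = ψ w i := by
          intro j hj
          rcases eq_or_ne j i with rfl | hne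
          · rfl
          · refine hSym w hw0 j i (fun S hS => ?_)
            have hiS : i ∉ S := by
              intro h
              have := hS h
              rw [mem_sdiff, mem_insert] at this
              exact this.2 (Or.inr (mem_singleton_self i))
            have hjS : j ∉ S := by
              intro h
              have := hS h
              rw [mem_sdiff, mem_insert] at this
              exact this.2 (Or.inl rfl)
            show c * unanGame T (insert j S) = c * unanGame T (insert i S)
            have e1 : unanGame T (insert j S) = 0 := by
              unfold unanGame
              refine if_neg (fun h => ?_)
              rcases mem_insert.1 (h hiT) with h' | h'
              · exact hne h'.symm
              · exact hiS h'
            have e2 : unanGame T (insert i S) = 0 := by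
              unfold unanGame
              refine if_neg (fun h => ?_)
              rcases mem_insert.1 (h hj) with h' | h'
              · exact hne h'
              · exact hjS h'
            rw [e1, e2]
        -- efficiency
        have heff : ∑ j : α, ψ w j = c := by
          rw [hEff w hw0]
          show c * unanGame T Finset.univ = c
          unfold unanGame
          rw [if_pos (subset_univ T), mul_one]
        have hTsum : ∑ j ∈ T, ψ w j = ∑ j : α, ψ w j :=
          Finset.sum_subset (subset_univ T) (fun j _ hj => hdum j hj)
        have hconst : ∑ j ∈ T, ψ w j = T.card * ψ w i := by
          rw [Finset.sum_congr rfl hsym2, Finset.sum_const, nsmul_eq_mul]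
        have hcard0 : (T.card : ℝ) ≠ 0 :=
          Nat.cast_ne_zero.2 (card_pos.2 hTne).ne'
        have : (T.card : ℝ) * ψ w i = c := by rw [← hconst, hTsum, heff]
        rw [if_pos hiT]
        field_simp
        linarith [this]
      · rw [if_neg hiT]
        exact hdum i hiT
  -- put everything together
  calc ψ v i
      = ψ (fun S => ∑ T ∈ (Finset.univ : Finset α).powerset,
          unanCoef v T * unanGame T S) i := by
        congr 1
        funext S
        exact hdecomp S
    _ = ∑ T ∈ (Finset.univ : Finset α).powerset,
          ψ (fun S => unanCoef v T * unanGame T S) i :=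
        hψsum _ (fun T S => unanCoef v T * unanGame T S) hg0 i
    _ = ∑ T ∈ (Finset.univ : Finset α).powerset,
          (if i ∈ T then unanCoef v T / T.card else 0) :=
        Finset.sum_congr rfl hcomp
    _ = ∑ T ∈ (Finset.univ : Finset α).powerset,
          shapley (fun S => unanCoef v T * unanGame T S) i := by
        refine Finset.sum_congr rfl fun T _ => ?_
        by_cases h : i ∈ T
        · rw [shapley_unan_mem _ _ _ h, if_pos h]
        · rw [shapley_unan_not_mem _ _ _ h, if_neg h]
    _ = shapley (fun S => ∑ T ∈ (Finset.univ : Finset α).powerset,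
          unanCoef v T * unanGame T S) i :=
        (shapley_finsum _ (fun T S => unanCoef v T * unanGame T S) i).symm
    _ = shapley v i := by
        congr 1
        funext S
        exact (hdecomp S).symm
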